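/- Fix D ≥ 1, K ≥ 1, and let L be a nonempty list of states in (Fin D → Fin K) of length n. Let P : (Fin D → Fin K) → ℝ be the empirical joint distribution of L, and for each coordinate d : Fin D let P_d : Fin K → ℝ be the empirical distribution of the list of d-th coordinates of the elements of L. Then H(P) ≤ ∑_{d} H(P_d); that is, the sub-additivity gap δ = ∑_d H(P_d) − H(P) incurred by treating the D state elements as independent is nonnegative. -/

import Mathlib

/-- Shannon entropy of a probability vector on a finite type, with the
convention `0 * log 0 = 0` (automatic since `Real.log 0 = 0`). -/
noncomputable def shannonEntropy {α : Type*} [Fintype α] (p : α → ℝ) : ℝ :=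
  -∑ a, p a * Real.log (p a)

/-- The empirical distribution of a list `L` over a finite type `α`:
each `a : α` gets mass `(count of a in L) / (length of L)`. -/
noncomputable def empiricalDist {α : Type*} [DecidableEq α] (L : List α) (a : α) : ℝ :=
  (L.count a : ℝ) / (L.length : ℝ)

open Finset

lemma gibbs' {α : Type*} [Fintype α] (p q : α → ℝ) (hp : ∀ a, 0 ≤ p a)
    (hq : ∀ a, 0 ≤ q a) (hpq : ∀ a, p a ≠ 0 → q a ≠ 0)
    (hsum : ∑ a, q a ≤ ∑ a, p a) :
    ∑ a, p a * Real.log (q a) ≤ ∑ a, p a * Real.log (p a) := by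
  have key : ∀ a, p a * Real.log (q a) - p a * Real.log (p a) ≤ q a - p a := by
    intro a
    rcases eq_or_lt_of_le (hp a) with h | h
    · simp [← h, hq a]
    · have hq' : 0 < q a := (hq a).lt_of_ne (Ne.symm (hpq a h.ne'))
      have h2 := Real.log_le_sub_one_of_pos (x := q a / p a) (by positivity)
      rw [Real.log_div hq'.ne' h.ne'] at h2
      have h4 : p a * (q a / p a) = q a := mul_div_cancel₀ _ h.ne'
      nlinarith [mul_le_mul_of_nonneg_left h2 h.le]
  have h3 := Finset.sum_le_sum (fun a (_ : a ∈ univ) => key a)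
  rw [Finset.sum_sub_distrib, Finset.sum_sub_distrib] at h3
  linarith

lemma count_map_eq {α β : Type*} [Fintype α] [DecidableEq α] [DecidableEq β]
    (f : α → β) (L : List α) (k : β) :
    ((L.map f).count k : ℕ) = ∑ a : α, if f a = k then L.count a else 0 := by
  induction L with
  | nil => simp
  | cons x L ih =>
    simp only [List.map_cons, List.count_cons, ih, beq_iff_eq]
    have : ∀ a : α, (if f a = k then (L.count a + if x = a then 1 else 0) else 0)
        = (if f a = k then L.count a else 0) + (if a = x then (if f a = k then 1 else 0) else 0) := by
      intro a
      rcases eq_or_ne a x with rfl | hax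
      · split <;> simp
      · simp [hax, Ne.symm hax]
    rw [Finset.sum_congr rfl (fun a _ => this a), Finset.sum_add_distrib,
      Finset.sum_ite_eq' univ x (fun a => if f a = k then 1 else 0)]
    simp [add_comm]

lemma sum_count_eq_len {α : Type*} [Fintype α] [DecidableEq α] (L : List α) :
    ∑ a : α, L.count a = L.length := by
  induction L with
  | nil => simp
  | cons x L ih =>
    simp [List.count_cons, Finset.sum_add_distrib, ih, add_comm]

/-- The entropy of the empirical joint distribution of a nonempty list of states in
`Fin D → Fin K` is at most the sum over the `D` coordinates of the entropies of the
per-coordinate empirical distributions: the sub-additivity gap is nonnegative. -/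
theorem empirical_entropy_le_sum_coordinate_entropies (D K : ℕ) (hD : 1 ≤ D) (hK : 1 ≤ K)
    (L : List (Fin D → Fin K)) (hL : L ≠ []) :
    shannonEntropy (empiricalDist L) ≤
      ∑ d : Fin D, shannonEntropy (empiricalDist (L.map (fun s => s d))) := by
  classical
  have hn0 : 0 < (L.length : ℝ) := by exact_mod_cast List.length_pos_iff.mpr hL
  set p : (Fin D → Fin K) → ℝ := empiricalDist L with hpdef
  set Pd : Fin D → Fin K → ℝ := fun d => empiricalDist (L.map (fun s => s d)) with hPddef
  have hp0 : ∀ a, 0 ≤ p a := fun a => by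
    simp only [hpdef, empiricalDist]; positivity
  have hPd0 : ∀ d k, 0 ≤ Pd d k := fun d k => by
    simp only [hPddef, empiricalDist]; positivity
  -- marginal identity
  have hmarg : ∀ (d : Fin D) (k : Fin K), ∑ a : Fin D → Fin K,
      (if a d = k then p a else 0) = Pd d k := by
    intro d k
    have hc := count_map_eq (fun s : Fin D → Fin K => s d) L k
    have hc' : ((L.map (fun s => s d)).count k : ℝ)
        = ∑ a : Fin D → Fin K, (if a d = k then (L.count a : ℝ) else 0) := by
      rw [hc]; push_cast; rfl
    simp only [hpdef, hPddef, empiricalDist, List.length_map, hc', Finset.sum_div]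
    refine Finset.sum_congr rfl fun a _ => ?_
    split <;> simp
  -- positivity of marginals on support
  have hmem : ∀ a, p a ≠ 0 → ∀ d, 0 < Pd d (a d) := by
    intro a ha d
    have hc : 0 < L.count a := by
      by_contra hc
      push_neg at hc
      exact ha (by simp [hpdef, empiricalDist, Nat.le_zero.mp hc])
    have haL : a ∈ L := List.count_pos_iff.mp hc
    have h2 : a d ∈ L.map (fun s => s d) := List.mem_map_of_mem haL
    have h3 : 0 < (L.map (fun s => s d)).count (a d) := List.count_pos_iff.mpr h2
    have h3' : 0 < ((L.map (fun s => s d)).count (a d) : ℝ) := by exact_mod_cast h3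
    simp only [hPddef, empiricalDist, List.length_map]
    exact div_pos h3' hn0
  set q : (Fin D → Fin K) → ℝ := fun a => ∏ d, Pd d (a d) with hqdef
  have hq0 : ∀ a, 0 ≤ q a := fun a => Finset.prod_nonneg fun d _ => hPd0 d _
  have hpq : ∀ a, p a ≠ 0 → q a ≠ 0 := fun a ha =>
    (Finset.prod_pos fun d _ => hmem a ha d).ne'
  have hPdsum : ∀ d, ∑ k, Pd d k = 1 := by
    intro d
    have h := sum_count_eq_len (L.map (fun s => s d))
    rw [List.length_map] at h
    simp only [hPddef, empiricalDist, List.length_map]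
    rw [← Finset.sum_div, div_eq_one_iff_eq hn0.ne']
    exact_mod_cast h
  have hpsum : ∑ a, p a = 1 := by
    have h := sum_count_eq_len L
    simp only [hpdef, empiricalDist]
    rw [← Finset.sum_div, div_eq_one_iff_eq hn0.ne']
    exact_mod_cast h
  have hqsum : ∑ a, q a = 1 := by
    have := Finset.prod_univ_sum (fun _ : Fin D => (Finset.univ : Finset (Fin K)))
      (fun d k => Pd d k)
    rw [Fintype.piFinset_univ] at this
    rw [hqdef, ← this]
    simp [hPdsum]
  -- Gibbs inequality
  have hg := gibbs' p q hp0 hq0 hpq (by rw [hqsum, hpsum])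
  -- rewrite ∑ p log q
  have hstep : ∑ a, p a * Real.log (q a)
      = ∑ d, ∑ k, Pd d k * Real.log (Pd d k) := by
    have h1 : ∑ a, p a * Real.log (q a)
        = ∑ a, ∑ d, p a * Real.log (Pd d (a d)) := by
      refine Finset.sum_congr rfl fun a _ => ?_
      by_cases ha : p a = 0
      · simp [ha]
      · rw [hqdef, Real.log_prod (fun d _ => (hmem a ha d).ne'), Finset.mul_sum]
    rw [h1, Finset.sum_comm]
    refine Finset.sum_congr rfl fun d _ => ?_
    have h2 : ∑ a : Fin D → Fin K, p a * Real.log (Pd d (a d))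
        = ∑ a : Fin D → Fin K, ∑ k, if a d = k then p a * Real.log (Pd d k) else 0 := by
      refine Finset.sum_congr rfl fun a _ => ?_
      rw [Finset.sum_ite_eq]
      simp
    rw [h2, Finset.sum_comm]
    refine Finset.sum_congr rfl fun k _ => ?_
    rw [← hmarg d k, Finset.sum_mul]
    refine Finset.sum_congr rfl fun a _ => ?_
    split <;> simp
  rw [hstep] at hg
  have hend : ∑ d : Fin D, shannonEntropy (empiricalDist (L.map (fun s => s d)))
      = -∑ d, ∑ k, Pd d k * Real.log (Pd d k) := by
    rw [← Finset.sum_neg_distrib]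
    rfl
  rw [hend]
  show -∑ a, p a * Real.log (p a) ≤ _
  linarith
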